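/- For any homogeneous relation H on X and any two distinct elements x, y ∈ X, there exists a unique largest (with respect to inclusion) homogeneous module of H containing x but not y. -/
import Mathlib


/-- `H` is a homogeneous relation: for each `x`, the binary relation
`H x · ·` is an equivalence relation on the elements distinct from `x`. -/
def IsHomRel {X : Type*} (H : X → X → X → Prop) : Prop :=
  (∀ x y, y ≠ x → H x y y) ∧
  (∀ x y z, y ≠ x → z ≠ x → H x y z → H x z y) ∧
  (∀ x y z w, y ≠ x → z ≠ x → w ≠ x → H x y z → H x z w → H x y w)

/-- `M` is a homogeneous module of `H`. -/
def IsModule {X : Type*} (H : X → X → X → Prop) (M : Set X) : Prop :=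
  ∀ m ∈ M, ∀ m' ∈ M, ∀ x ∉ M, H x m m'

/-- Two sets overlap. -/
def Overlap {X : Type*} (A B : Set X) : Prop :=
  (A ∩ B).Nonempty ∧ (A \ B).Nonempty ∧ (B \ A).Nonempty

theorem stmt_7 {X : Type*} [Fintype X] (H : X → X → X → Prop)
    (hH : IsHomRel H) (x y : X) (hxy : x ≠ y) :
    ∃ Z : Set X,
      (IsModule H Z ∧ x ∈ Z ∧ y ∉ Z ∧
        ∀ M : Set X, IsModule H M → x ∈ M → y ∉ M → M ⊆ Z) ∧
      ∀ Z' : Set X,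
        (IsModule H Z' ∧ x ∈ Z' ∧ y ∉ Z' ∧
          ∀ M : Set X, IsModule H M → x ∈ M → y ∉ M → M ⊆ Z') → Z' = Z := by

  classical
  set F : Set (Set X) := {M | IsModule H M ∧ x ∈ M ∧ y ∉ M} with hF
  refine ⟨⋃₀ F, ⟨?_, ?_, ?_, ?_⟩, ?_⟩
  · -- Z is a module
    intro m hm m' hm' s hs
    obtain ⟨A, hA, hmA⟩ := hm
    obtain ⟨B, hB, hmB⟩ := hm'
    have hsA : s ∉ A := fun h => hs ⟨A, hA, h⟩
    have hsB : s ∉ B := fun h => hs ⟨B, hB, h⟩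
    have hxs : x ≠ s := fun h => hsA (h ▸ hA.2.1)
    have hms : m ≠ s := fun h => hsA (h ▸ hmA)
    have hm's : m' ≠ s := fun h => hsB (h ▸ hmB)
    have h1 : H s m x := hA.1 m hmA x hA.2.1 s hsA
    have h2 : H s x m' := hB.1 x hB.2.1 m' hmB s hsB
    exact hH.2.2 s m x m' hms hxs hm's h1 h2
  · -- x ∈ Z
    refine ⟨{x}, ⟨?_, rfl, ?_⟩, rfl⟩
    · intro m hm m' hm' s hs
      rw [Set.mem_singleton_iff] at hm hm'
      rw [hm, hm']
      exact hH.1 s x (fun h => hs (h ▸ rfl))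
    · simpa using (Ne.symm hxy)
  · -- y ∉ Z
    rintro ⟨A, hA, hyA⟩
    exact hA.2.2 hyA
  · -- maximality
    intro M hM hxM hyM
    exact Set.subset_sUnion_of_mem ⟨hM, hxM, hyM⟩
  · -- uniqueness
    rintro Z' ⟨hZ'1, hZ'2, hZ'3, hZ'4⟩
    apply Set.Subset.antisymm
    · exact Set.subset_sUnion_of_mem ⟨hZ'1, hZ'2, hZ'3⟩
    · intro z hz
      obtain ⟨A, hA, hzA⟩ := hz
      exact hZ'4 A hA.1 hA.2.1 hA.2.2 hzA
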